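/- For all a₀, a₁, a₂, a₃ ∈ ℂ, setting A = a₀ + a₁·i + a₂·j + a₃·k ∈ ℍ_ℂ, p = (a₀ + a₁ + 𝕚a₂ − 𝕚a₃)/2, and q = (𝕚a₀ − 𝕚a₁ + a₂ + a₃)/2, one has the identity A·L·A^c = 2·((p² − q²)·i + 2pq·j + 𝕚(p² + q²)·k). (This is the converse direction of the equivalence between the representation Φ = w(p² − q², 2pq, 𝕚(p² + q²)) and the quaternionic representation λ·A·L·A^c.) -/

import Mathlib

open Quaternion

/-- The complex quaternion `a + b i + c j + d k`. -/
noncomputable def mkQ (a b c d : ℂ) : Quaternion ℂ := ⟨a, b, c, d⟩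

/-- The null quaternion `L = i + 𝕚 j ∈ ℍ_ℂ`. -/
noncomputable def Lq : Quaternion ℂ := mkQ 0 1 Complex.I 0

@[simp] lemma mkQ_re (a b c d : ℂ) : (mkQ a b c d).re = a := rfl
@[simp] lemma mkQ_imI (a b c d : ℂ) : (mkQ a b c d).imI = b := rfl
@[simp] lemma mkQ_imJ (a b c d : ℂ) : (mkQ a b c d).imJ = c := rfl
@[simp] lemma mkQ_imK (a b c d : ℂ) : (mkQ a b c d).imK = d := rfl

/-- For `A = a₀ + a₁ i + a₂ j + a₃ k`, with
`p = (a₀ + a₁ + 𝕚a₂ − 𝕚a₃)/2` and `q = (𝕚a₀ − 𝕚a₁ + a₂ + a₃)/2`, one has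
`A L A^c = 2((p² − q²) i + 2pq j + 𝕚(p² + q²) k)`. -/
theorem quaternionic_to_preimage (a₀ a₁ a₂ a₃ : ℂ)
    (p q : ℂ) (hp : p = (a₀ + a₁ + Complex.I * a₂ - Complex.I * a₃) / 2)
    (hq : q = (Complex.I * a₀ - Complex.I * a₁ + a₂ + a₃) / 2) :
    mkQ a₀ a₁ a₂ a₃ * Lq * star (mkQ a₀ a₁ a₂ a₃) =
      (2 : ℂ) • mkQ 0 (p ^ 2 - q ^ 2) (2 * p * q) (Complex.I * (p ^ 2 + q ^ 2)) := by
  have h3 : Complex.I ^ 3 = -Complex.I := by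
    rw [pow_succ, Complex.I_sq]; ring
  subst hp hq
  simp only [Lq]
  ext <;>
    simp [Quaternion.ext_iff, re_mul, imI_mul, imJ_mul, imK_mul, re_star, imI_star,
      imJ_star, imK_star] <;>
    (try field_simp) <;>
    ring_nf <;>
    simp only [Complex.I_sq, h3] <;>
    ring
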